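/- arXiv:2106.07467 — 4 statements merged into one kernel-verified Lean document; each statement's English description precedes it below -/
import Mathlib

section
/- Let y : [0,∞) → (0,∞) be a C¹ function, γ ∈ (1,3), C > 0 constants, and suppose y'(t) ≥ -C·y(t)^{(γ+1)/(2γ-2)}·(1+y(t)²)^{3/2} for all t ≥ 0, and y(t) < 1/√γ for all t. Define Y(t) = (y(t)/√(1+y(t)²))^{(3-γ)/(2γ-2)}·(1+y(t)²)^{(γ+1)/(4γ-4)}. Then there exists a constant C' > 0 (depending only on C and γ) such that Y'(t) ≥ -C'·Y(t)² for all t ≥ 0. -/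
/-- Key polynomial inequality. -/
lemma stmt4_key (C K a u s p d : ℝ) (hC : 0 < C) (ha : 0 < a) (hu : 0 < u)
    (hs : 0 < s) (hp : 0 < p)
    (hK : a * s ^ 2 + u ^ 2 ≤ K)
    (hd : d ≥ -C * (p * u) * s ^ 3) :
    (a * (p / u) * s + p * (u / s)) * d ≥ -(C * K) * (p * s) ^ 2 := by
  have hA : 0 ≤ a * (p / u) * s + p * (u / s) := by positivity
  have h1 : (a * (p / u) * s + p * (u / s)) * (-C * (p * u) * s ^ 3)
      ≤ (a * (p / u) * s + p * (u / s)) * d := mul_le_mul_of_nonneg_left hd hA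
  have h2 : (a * (p / u) * s + p * (u / s)) * (-C * (p * u) * s ^ 3)
      = -(C * (p ^ 2 * s ^ 2) * (a * s ^ 2 + u ^ 2)) := by
    field_simp
  have h3 : C * (p ^ 2 * s ^ 2) * (a * s ^ 2 + u ^ 2) ≤ C * (p ^ 2 * s ^ 2) * K :=
    mul_le_mul_of_nonneg_left hK (by positivity)
  nlinarith [h1, h2, h3]

/-- If `y` is a positive `C¹` function with
`y' ≥ -C y^((γ+1)/(2γ-2)) (1+y²)^(3/2)` and `y < 1/√γ`, then the quantity
`Y = (y/√(1+y²))^((3-γ)/(2γ-2)) (1+y²)^((γ+1)/(4γ-4))` satisfies a Riccati-type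
lower bound `Y' ≥ -C' Y²`. -/
theorem stmt_4 (γ C : ℝ) (hγ1 : 1 < γ) (hγ3 : γ < 3) (hC : 0 < C)
    (y y' : ℝ → ℝ)
    (hderiv : ∀ t : ℝ, 0 ≤ t → HasDerivAt y (y' t) t)
    (hcont : ContinuousOn y' (Set.Ici 0))
    (hpos : ∀ t : ℝ, 0 ≤ t → 0 < y t)
    (hupper : ∀ t : ℝ, 0 ≤ t → y t < 1 / Real.sqrt γ)
    (hineq : ∀ t : ℝ, 0 ≤ t →
      y' t ≥ -C * (y t) ^ ((γ + 1) / (2 * γ - 2)) * (1 + (y t) ^ 2) ^ ((3:ℝ) / 2)) :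
    ∃ C' : ℝ, 0 < C' ∧ ∀ t : ℝ, 0 ≤ t →
      deriv (fun s : ℝ =>
          (y s / Real.sqrt (1 + (y s) ^ 2)) ^ ((3 - γ) / (2 * γ - 2))
            * (1 + (y s) ^ 2) ^ ((γ + 1) / (4 * γ - 4))) t
        ≥ -C' * ((y t / Real.sqrt (1 + (y t) ^ 2)) ^ ((3 - γ) / (2 * γ - 2))
            * (1 + (y t) ^ 2) ^ ((γ + 1) / (4 * γ - 4))) ^ 2 := by
  have hγ0 : (0:ℝ) < γ := by linarith
  have h2γ : (0:ℝ) < 2 * γ - 2 := by linarith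
  have h4γ : (4:ℝ) * γ - 4 ≠ 0 := by intro h; nlinarith
  set a : ℝ := (3 - γ) / (2 * γ - 2) with ha_def
  have ha : 0 < a := div_pos (by linarith) h2γ
  set K : ℝ := a * (1 + 1 / γ) + 1 / γ with hK_def
  have hK0 : 0 < K := by positivity
  -- pointwise identity: Y = y^a * √(1+y²)
  have hFeq : ∀ v : ℝ, 0 < v →
      (v / Real.sqrt (1 + v ^ 2)) ^ a * (1 + v ^ 2) ^ ((γ + 1) / (4 * γ - 4))
        = v ^ a * Real.sqrt (1 + v ^ 2) := by
    intro v hv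
    have hw : (0:ℝ) < 1 + v ^ 2 := by positivity
    have hsw : 0 < Real.sqrt (1 + v ^ 2) := Real.sqrt_pos.mpr hw
    have h1 : (v / Real.sqrt (1 + v ^ 2)) ^ a
        = v ^ a / (Real.sqrt (1 + v ^ 2)) ^ a :=
      Real.div_rpow hv.le hsw.le a
    have h2 : (Real.sqrt (1 + v ^ 2)) ^ a = (1 + v ^ 2) ^ (a / 2) := by
      rw [Real.sqrt_eq_rpow, ← Real.rpow_mul hw.le]
      ring_nf
    have hb : (γ + 1) / (4 * γ - 4) = a / 2 + 1 / 2 := by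
      rw [ha_def]; field_simp [h2γ.ne', sub_ne_zero.mpr hγ1.ne']; ring
    have h3 : (1 + v ^ 2) ^ ((γ + 1) / (4 * γ - 4))
        = (1 + v ^ 2) ^ (a / 2) * Real.sqrt (1 + v ^ 2) := by
      rw [hb, Real.rpow_add hw, Real.sqrt_eq_rpow]
    rw [h1, h2, h3]
    have hne : (1 + v ^ 2) ^ (a / 2) ≠ 0 := by positivity
    field_simp
  refine ⟨C * K, by positivity, fun t ht => ?_⟩
  have hy' := hderiv t ht
  have hu : 0 < y t := hpos t ht
  have h1u : (0:ℝ) < 1 + (y t) ^ 2 := by positivity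
  have hs : 0 < Real.sqrt (1 + (y t) ^ 2) := Real.sqrt_pos.mpr h1u
  have hs2 : (Real.sqrt (1 + (y t) ^ 2)) ^ 2 = 1 + (y t) ^ 2 := Real.sq_sqrt h1u.le
  have hp : 0 < (y t) ^ a := Real.rpow_pos_of_pos hu a
  -- derivative of inner pow
  have hsq : HasDerivAt (fun v : ℝ => 1 + v ^ 2) (2 * y t) (y t) := by
    simpa using (hasDerivAt_pow 2 (y t)).const_add 1
  have hsqrt : HasDerivAt (fun v : ℝ => Real.sqrt (1 + v ^ 2))
      (y t / Real.sqrt (1 + (y t) ^ 2)) (y t) := by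
    have h := (Real.hasDerivAt_sqrt (ne_of_gt h1u)).comp (y t) hsq
    refine h.congr_deriv ?_
    field_simp
  have hrpow : HasDerivAt (fun v : ℝ => v ^ a) (a * (y t) ^ (a - 1)) (y t) :=
    Real.hasDerivAt_rpow_const (Or.inl hu.ne')
  have hF : HasDerivAt (fun v : ℝ => v ^ a * Real.sqrt (1 + v ^ 2))
      (a * (y t) ^ (a - 1) * Real.sqrt (1 + (y t) ^ 2)
        + (y t) ^ a * (y t / Real.sqrt (1 + (y t) ^ 2))) (y t) :=
    hrpow.mul hsqrt
  have hcomp : HasDerivAt (fun r : ℝ => (y r) ^ a * Real.sqrt (1 + (y r) ^ 2))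
      ((a * (y t) ^ (a - 1) * Real.sqrt (1 + (y t) ^ 2)
        + (y t) ^ a * (y t / Real.sqrt (1 + (y t) ^ 2))) * y' t) t :=
    hF.comp t hy'
  -- the statement function agrees with y^a √(1+y²) near t
  have hev : ∀ᶠ r in nhds t, 0 < y r := by
    have : Set.Ioi (0:ℝ) ∈ nhds (y t) := Ioi_mem_nhds hu
    exact hy'.continuousAt.preimage_mem_nhds this
  have hEq : (fun r : ℝ =>
        (y r / Real.sqrt (1 + (y r) ^ 2)) ^ a
          * (1 + (y r) ^ 2) ^ ((γ + 1) / (4 * γ - 4)))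
      =ᶠ[nhds t] (fun r : ℝ => (y r) ^ a * Real.sqrt (1 + (y r) ^ 2)) := by
    filter_upwards [hev] with r hr
    exact hFeq (y r) hr
  have hD : HasDerivAt (fun r : ℝ =>
        (y r / Real.sqrt (1 + (y r) ^ 2)) ^ a
          * (1 + (y r) ^ 2) ^ ((γ + 1) / (4 * γ - 4)))
      ((a * (y t) ^ (a - 1) * Real.sqrt (1 + (y t) ^ 2)
        + (y t) ^ a * (y t / Real.sqrt (1 + (y t) ^ 2))) * y' t) t :=
    hcomp.congr_of_eventuallyEq hEq
  rw [hD.deriv, hFeq (y t) hu]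
  -- rewrite the hypothesis inequality
  have haa : (γ + 1) / (2 * γ - 2) = a + 1 := by
    rw [ha_def]; field_simp [h2γ.ne', sub_ne_zero.mpr hγ1.ne']; ring
  have hpow1 : (y t) ^ ((γ + 1) / (2 * γ - 2)) = (y t) ^ a * y t := by
    rw [haa, Real.rpow_add_one hu.ne']
  have hpow32 : (1 + (y t) ^ 2) ^ ((3:ℝ) / 2) = (Real.sqrt (1 + (y t) ^ 2)) ^ 3 := by
    rw [show ((3:ℝ) / 2) = (1 / 2) * 3 by ring, Real.rpow_mul h1u.le,
      ← Real.sqrt_eq_rpow, show (3:ℝ) = ((3:ℕ):ℝ) by norm_num, Real.rpow_natCast]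
  have hd : y' t ≥ -C * ((y t) ^ a * y t) * (Real.sqrt (1 + (y t) ^ 2)) ^ 3 := by
    have := hineq t ht
    rwa [hpow1, hpow32] at this
  have hsub : (y t) ^ (a - 1) = (y t) ^ a / y t := Real.rpow_sub_one hu.ne' a
  rw [hsub]
  -- bound on K
  have hu2 : (y t) ^ 2 ≤ 1 / γ := by
    have h := hupper t ht
    have hsg : Real.sqrt γ > 0 := Real.sqrt_pos.mpr hγ0
    have : (y t) ^ 2 < (1 / Real.sqrt γ) ^ 2 := by
      apply sq_lt_sq' _ h
      · linarith [hu]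
    calc (y t) ^ 2 ≤ (1 / Real.sqrt γ) ^ 2 := this.le
      _ = 1 / γ := by rw [div_pow, one_pow, Real.sq_sqrt hγ0.le]
  have hKb : a * (Real.sqrt (1 + (y t) ^ 2)) ^ 2 + (y t) ^ 2 ≤ K := by
    rw [hs2, hK_def]
    have h1γ : 0 < 1 / γ := by positivity
    nlinarith [mul_le_mul_of_nonneg_left hu2 ha.le]
  have := stmt4_key C K a (y t) (Real.sqrt (1 + (y t) ^ 2)) ((y t) ^ a) (y' t)
    hC ha hu hs hp hKb hd
  calc (a * ((y t) ^ a / y t) * Real.sqrt (1 + (y t) ^ 2)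
        + (y t) ^ a * (y t / Real.sqrt (1 + (y t) ^ 2))) * y' t
      ≥ -(C * K) * ((y t) ^ a * Real.sqrt (1 + (y t) ^ 2)) ^ 2 := this
    _ = -(C * K) * ((y t) ^ a * Real.sqrt (1 + (y t) ^ 2)) ^ 2 := rfl
end

section
/- Let q : [0,T) → ℝ be differentiable, μ : [0,T) → ℝ continuous with μ(t) > 0, and N > 0. Suppose q(0) ≤ -N√(1+υ) for some υ > 0 and q'(t) ≤ -(1/2)·μ(t)·(q(t)² - N²) for all t. Then q(t) ≤ q(0) for all t ∈ [0,T), and 1/q(t) ≥ 1/q(0) + (υ/(2(1+υ)))·∫₀ᵗ μ(s) ds; in particular if ∫₀^∞ μ(s)ds = ∞ then T < ∞. -/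
open Filter intervalIntegral Set

lemma key_lemma (T : ℝ) (q q' μ : ℝ → ℝ) (N υ : ℝ)
    (hN : 0 < N) (hυ : 0 < υ)
    (hμc : Continuous μ) (hμpos : ∀ t : ℝ, 0 ≤ t → 0 < μ t)
    (hq0 : q 0 ≤ -N * Real.sqrt (1 + υ))
    (hderiv : ∀ t ∈ Set.Ico (0:ℝ) T, HasDerivAt q (q' t) t)
    (hineq : ∀ t ∈ Set.Ico (0:ℝ) T, q' t ≤ -(1/2) * μ t * ((q t) ^ 2 - N ^ 2)) :
    ∀ t ∈ Set.Ico (0:ℝ) T,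
        q t ≤ q 0 ∧
        1 / q t ≥ 1 / q 0 + (υ / (2 * (1 + υ))) * ∫ s in (0:ℝ)..t, μ s := by
  have hs0 : (0:ℝ) < Real.sqrt (1 + υ) := Real.sqrt_pos.2 (by linarith)
  have hs2 : Real.sqrt (1 + υ) ^ 2 = 1 + υ := Real.sq_sqrt (by linarith)
  have hq0neg : q 0 < 0 := lt_of_le_of_lt hq0 (by nlinarith)
  have hsq : ∀ x : ℝ, q x ≤ q 0 → N ^ 2 * (1 + υ) ≤ q x ^ 2 := by
    intro x hx
    have h1 : q x ≤ -(N * Real.sqrt (1 + υ)) := by nlinarith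
    have h2 : (0:ℝ) ≤ N * Real.sqrt (1 + υ) := by positivity
    have h3 := mul_self_le_mul_self h2 (by linarith : N * Real.sqrt (1 + υ) ≤ -q x)
    nlinarith [h3]
  intro t ht
  obtain ⟨ht0, htT⟩ := ht
  have hsub : Icc (0:ℝ) t ⊆ Ico (0:ℝ) T := fun x hx => ⟨hx.1, lt_of_le_of_lt hx.2 htT⟩
  have hle : ∀ x ∈ Icc (0:ℝ) t, q x ≤ q 0 := by
    have := image_le_of_deriv_right_lt_deriv_boundary
      (f := q) (f' := q') (a := 0) (b := t) (B := fun _ => q 0) (B' := fun _ => 0)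
      (fun x hx => ((hderiv x (hsub hx)).continuousAt).continuousWithinAt)
      (fun x hx => (hderiv x (hsub ⟨hx.1, hx.2.le⟩)).hasDerivWithinAt)
      le_rfl (fun x => hasDerivAt_const x (q 0))
      (fun x hx hqx => by
        have hμx := hμpos x hx.1
        have h2 : N ^ 2 * (1 + υ) ≤ q x ^ 2 := hsq x (le_of_eq hqx)
        have h4 := hineq x (hsub ⟨hx.1, hx.2.le⟩)
        have h5 : (0:ℝ) < q x ^ 2 - N ^ 2 := by nlinarith [mul_pos (pow_pos hN 2) hυ]
        have := mul_pos hμx h5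
        show q' x < 0
        nlinarith)
    exact fun x hx => this hx
  have hqneg : ∀ x ∈ Icc (0:ℝ) t, q x < 0 := fun x hx => lt_of_le_of_lt (hle x hx) hq0neg
  refine ⟨hle t ⟨ht0, le_rfl⟩, ?_⟩
  set c : ℝ := υ / (2 * (1 + υ)) with hc
  set g : ℝ → ℝ := fun x => (q x)⁻¹ - c * ∫ s in (0:ℝ)..x, μ s with hg
  have hgderiv : ∀ x ∈ Icc (0:ℝ) t,
      HasDerivAt g (-q' x / q x ^ 2 - c * μ x) x := by
    intro x hx
    have h1 : HasDerivAt (fun y => (q y)⁻¹) (-q' x / q x ^ 2) x :=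
      (hderiv x (hsub hx)).inv (hqneg x hx).ne
    have h2 : HasDerivAt (fun y => ∫ s in (0:ℝ)..y, μ s) (μ x) x :=
      (hμc.integral_hasStrictDerivAt 0 x).hasDerivAt
    exact h1.sub (h2.const_mul c)
  have hgmono : MonotoneOn g (Icc (0:ℝ) t) := by
    apply monotoneOn_of_deriv_nonneg (convex_Icc 0 t)
    · exact fun x hx => (hgderiv x hx).continuousAt.continuousWithinAt
    · intro x hx
      rw [interior_Icc] at hx
      exact ((hgderiv x ⟨hx.1.le, hx.2.le⟩).differentiableAt).differentiableWithinAt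
    · intro x hx
      rw [interior_Icc] at hx
      have hx' : x ∈ Icc (0:ℝ) t := ⟨hx.1.le, hx.2.le⟩
      rw [(hgderiv x hx').deriv]
      have hμx := hμpos x hx.1.le
      have hQ : N ^ 2 * (1 + υ) ≤ q x ^ 2 := hsq x (hle x hx')
      have hQ0 : (0:ℝ) < q x ^ 2 := by nlinarith [hqneg x hx']
      have hq' := hineq x (hsub hx')
      rw [sub_nonneg, hc, div_mul_eq_mul_div, div_le_iff₀ (by positivity), div_mul_eq_mul_div,
        le_div_iff₀ hQ0]
      have h3 : (0:ℝ) ≤ μ x * (q x ^ 2 - N ^ 2 * (1 + υ)) :=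
        mul_nonneg hμx.le (by linarith)
      have h4 : (1/2) * μ x * (q x ^ 2 - N ^ 2) ≤ -q' x := by linarith
      have h6 := mul_le_mul_of_nonneg_right h4 (by positivity : (0:ℝ) ≤ 2 * (1 + υ))
      nlinarith [h3, h6]
  have h0t := hgmono (left_mem_Icc.2 ht0) (right_mem_Icc.2 ht0) ht0
  simp only [hg, intervalIntegral.integral_same, mul_zero, sub_zero] at h0t
  rw [ge_iff_le, one_div, one_div]
  linarith

/-- Riccati-type inequality with threshold `N`: if `q(0) ≤ -N√(1+υ)` and
`q' ≤ -(1/2) μ (q² - N²)` with `μ > 0`, then `q` stays below `q(0)`, the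
reciprocal obeys the stated integral lower bound, and if `∫₀^∞ μ = ∞` then the
solution cannot exist globally (the maximal time is finite). -/
theorem stmt_8 (T : ℝ) (q q' μ : ℝ → ℝ) (N υ : ℝ)
    (hN : 0 < N) (hυ : 0 < υ)
    (hμc : Continuous μ) (hμpos : ∀ t : ℝ, 0 ≤ t → 0 < μ t)
    (hq0 : q 0 ≤ -N * Real.sqrt (1 + υ))
    (hderiv : ∀ t ∈ Set.Ico (0:ℝ) T, HasDerivAt q (q' t) t)
    (hineq : ∀ t ∈ Set.Ico (0:ℝ) T, q' t ≤ -(1/2) * μ t * ((q t) ^ 2 - N ^ 2)) :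
    (∀ t ∈ Set.Ico (0:ℝ) T,
        q t ≤ q 0 ∧
        1 / q t ≥ 1 / q 0 + (υ / (2 * (1 + υ))) * ∫ s in (0:ℝ)..t, μ s) ∧
    (Tendsto (fun t : ℝ => ∫ s in (0:ℝ)..t, μ s) atTop atTop →
      ¬ (∀ t : ℝ, 0 ≤ t →
            HasDerivAt q (q' t) t ∧
            q' t ≤ -(1/2) * μ t * ((q t) ^ 2 - N ^ 2))) := by
  refine ⟨key_lemma T q q' μ N υ hN hυ hμc hμpos hq0 hderiv hineq, ?_⟩
  intro hInt hall
  have hs0 : (0:ℝ) < Real.sqrt (1 + υ) := Real.sqrt_pos.2 (by linarith)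
  have hq0neg : q 0 < 0 := lt_of_le_of_lt hq0 (by nlinarith)
  have hc : (0:ℝ) < υ / (2 * (1 + υ)) := by positivity
  -- the bound holds at every t ≥ 0
  have key : ∀ t : ℝ, 0 ≤ t →
      q t ≤ q 0 ∧ 1 / q t ≥ 1 / q 0 + (υ / (2 * (1 + υ))) * ∫ s in (0:ℝ)..t, μ s := by
    intro t ht
    exact key_lemma (t + 1) q q' μ N υ hN hυ hμc hμpos hq0
      (fun s hs => (hall s hs.1).1) (fun s hs => (hall s hs.1).2) t ⟨ht, by linarith⟩
  -- so c * ∫₀ᵗ μ is bounded by -1/q 0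
  obtain ⟨t, ht0, htB⟩ :
      ∃ t : ℝ, 0 ≤ t ∧ (-(1 / q 0)) / (υ / (2 * (1 + υ))) < ∫ s in (0:ℝ)..t, μ s := by
    have h1 : ∀ᶠ t : ℝ in atTop,
        (-(1 / q 0)) / (υ / (2 * (1 + υ))) < ∫ s in (0:ℝ)..t, μ s :=
      hInt.eventually (eventually_gt_atTop _)
    obtain ⟨t, ht0, htB⟩ := (h1.and (eventually_ge_atTop (0:ℝ))).exists
    exact ⟨t, htB, ht0⟩
  obtain ⟨hqt, hbound⟩ := key t ht0
  have hqtneg : q t < 0 := lt_of_le_of_lt hqt hq0neg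
  have h2 : 1 / q t < 0 := by
    rw [one_div]; exact inv_neg''.2 hqtneg
  have h3 : (υ / (2 * (1 + υ))) * ((-(1 / q 0)) / (υ / (2 * (1 + υ)))) <
      (υ / (2 * (1 + υ))) * ∫ s in (0:ℝ)..t, μ s :=
    mul_lt_mul_of_pos_left htB hc
  rw [mul_div_cancel₀ _ hc.ne'] at h3
  linarith
end

section
/- For P(ρ,S) = (γ-1)n(ρ,S)^γ exp(S/C_v) with n the implicit root of n^γ exp(S/C_v)+c²(n-ρ)=0: P(ρ,S) ≥ 0 with equality iff ρ = 0, and for ρ > 0, ∂ρ P(ρ,S) > 0. -/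
open Real Filter

/-- For `P(ρ,S) = (γ-1) n(ρ,S)^γ exp(S/C_v)`: `P ≥ 0` with equality iff
`ρ = 0`, and for `ρ > 0` the partial derivative `∂ρ P` is positive. -/
theorem stmt_13 (γ Cv c : ℝ) (hγ : 1 < γ) (hCv : 0 < Cv) (hc : 0 < c)
    (nf : ℝ → ℝ → ℝ)
    (hnonneg : ∀ ρ : ℝ, 0 ≤ ρ → ∀ S : ℝ, 0 ≤ nf ρ S)
    (heq : ∀ ρ : ℝ, 0 ≤ ρ → ∀ S : ℝ,
      (nf ρ S) ^ γ * Real.exp (S / Cv) + c ^ 2 * (nf ρ S - ρ) = 0) :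
    (∀ ρ : ℝ, 0 ≤ ρ → ∀ S : ℝ,
      0 ≤ (γ - 1) * (nf ρ S) ^ γ * Real.exp (S / Cv) ∧
      ((γ - 1) * (nf ρ S) ^ γ * Real.exp (S / Cv) = 0 ↔ ρ = 0)) ∧
    (∀ ρ : ℝ, 0 < ρ → ∀ S : ℝ,
      ∃ d : ℝ, 0 < d ∧
        HasDerivAt (fun r : ℝ => (γ - 1) * (nf r S) ^ γ * Real.exp (S / Cv)) d ρ) := by
  have hγ0 : γ ≠ 0 := by linarith
  have hγ1 : (0:ℝ) < γ - 1 := by linarith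
  have hc2 : (0:ℝ) < c ^ 2 := by positivity
  constructor
  · intro ρ hρ S
    have hE : 0 < Real.exp (S / Cv) := Real.exp_pos _
    have hn0 : 0 ≤ nf ρ S := hnonneg ρ hρ S
    have hpow : 0 ≤ nf ρ S ^ γ := Real.rpow_nonneg hn0 γ
    refine ⟨by positivity, ?_, ?_⟩
    · intro h
      have hnγ : nf ρ S ^ γ = 0 := by
        rcases mul_eq_zero.1 h with h' | h'
        · rcases mul_eq_zero.1 h' with h'' | h''
          · linarith
          · exact h''
        · exact absurd h' hE.ne'
      have hn : nf ρ S = 0 := (Real.rpow_eq_zero hn0 hγ0).1 hnγ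
      have := heq ρ hρ S
      rw [hn, Real.zero_rpow hγ0] at this
      nlinarith
    · intro h
      subst h
      have h0 := heq 0 le_rfl S
      have : nf 0 S = 0 := by nlinarith
      rw [this, Real.zero_rpow hγ0]
      ring
  · intro ρ hρ S
    have hE : 0 < Real.exp (S / Cv) := Real.exp_pos _
    set E := Real.exp (S / Cv) with hEdef
    have hn0 : 0 ≤ nf ρ S := hnonneg ρ hρ.le S
    have hnpos : 0 < nf ρ S := by
      rcases hn0.lt_or_eq with h | h
      · exact h
      · exfalso
        have := heq ρ hρ.le S
        rw [← h, Real.zero_rpow hγ0] at this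
        nlinarith
    -- F and its strict monotonicity on [0,∞)
    set F : ℝ → ℝ := fun x => x ^ γ * E + c ^ 2 * x with hFdef
    have hFmono : StrictMonoOn F (Set.Ici 0) := by
      intro a ha b hb hab
      have h1 : a ^ γ < b ^ γ := Real.rpow_lt_rpow ha hab (by linarith)
      simp only [hFdef]
      nlinarith
    have hkey : ∀ r : ℝ, 0 ≤ r → F (nf r S) = c ^ 2 * r := by
      intro r hr
      have := heq r hr S
      simp only [hFdef]
      linarith
    have hevpos : ∀ᶠ r in nhds ρ, 0 < r := eventually_gt_nhds hρ
    -- continuity of r ↦ nf r S at ρ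
    have hgcont : ContinuousAt (fun r => nf r S) ρ := by
      rw [ContinuousAt]
      refine tendsto_order.2 ⟨?_, ?_⟩
      · intro a ha
        rcases lt_or_ge a 0 with h | h
        · filter_upwards [hevpos] with r hr
          exact lt_of_lt_of_le h (hnonneg r hr.le S)
        · have hFa : F a < c ^ 2 * ρ := by
            rw [← hkey ρ hρ.le]
            exact hFmono h (Set.mem_Ici.2 hn0) ha
          have hev2 : ∀ᶠ r in nhds ρ, F a < c ^ 2 * r :=
            ((continuous_const.mul continuous_id).continuousAt (x := ρ)).eventually
              (eventually_gt_nhds hFa)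
          filter_upwards [hev2, hevpos] with r h1 h2
          by_contra hcon
          push_neg at hcon
          have : F (nf r S) ≤ F a :=
            hFmono.monotoneOn (Set.mem_Ici.2 (hnonneg r h2.le S)) (Set.mem_Ici.2 h) hcon
          rw [hkey r h2.le] at this
          linarith
      · intro b hb
        have hb0 : 0 < b := lt_of_le_of_lt hn0 hb
        have hFb : c ^ 2 * ρ < F b := by
          rw [← hkey ρ hρ.le]
          exact hFmono (Set.mem_Ici.2 hn0) hb0.le hb
        have hev2 : ∀ᶠ r in nhds ρ, c ^ 2 * r < F b :=
          ((continuous_const.mul continuous_id).continuousAt (x := ρ)).eventually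
            (eventually_lt_nhds hFb)
        filter_upwards [hev2, hevpos] with r h1 h2
        by_contra hcon
        push_neg at hcon
        have : F b ≤ F (nf r S) :=
          hFmono.monotoneOn (Set.mem_Ici.2 hb0.le)
            (Set.mem_Ici.2 (hnonneg r h2.le S)) hcon
        rw [hkey r h2.le] at this
        linarith
    -- inverse function derivative
    set F' : ℝ := γ * nf ρ S ^ (γ - 1) * E + c ^ 2 with hF'def
    have hF'pos : 0 < F' := by
      have : 0 < nf ρ S ^ (γ - 1) := Real.rpow_pos_of_pos hnpos _
      have hγpos : (0:ℝ) < γ := by linarith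
      simp only [hF'def]
      positivity
    have hf : HasDerivAt (fun x => F x / c ^ 2) (F' / c ^ 2) (nf ρ S) := by
      have h1 : HasDerivAt (fun x : ℝ => x ^ γ) (γ * nf ρ S ^ (γ - 1)) (nf ρ S) :=
        Real.hasDerivAt_rpow_const (Or.inl hnpos.ne')
      have h2 : HasDerivAt F (γ * nf ρ S ^ (γ - 1) * E + c ^ 2 * 1) (nf ρ S) :=
        (h1.mul_const E).add ((hasDerivAt_id _).const_mul (c ^ 2))
      have := h2.div_const (c ^ 2)
      simpa [hF'def] using this
    have hfg : ∀ᶠ r in nhds ρ, F (nf r S) / c ^ 2 = r := by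
      filter_upwards [hevpos] with r hr
      rw [hkey r hr.le]
      field_simp
    have hinv : HasDerivAt (fun r => nf r S) (F' / c ^ 2)⁻¹ ρ :=
      HasDerivAt.of_local_left_inverse hgcont hf
        (by positivity) hfg
    -- assemble
    set g' : ℝ := (F' / c ^ 2)⁻¹ with hg'def
    have hg'lt : g' < 1 := by
      have h1 : (1:ℝ) < F' / c ^ 2 := by
        rw [lt_div_iff₀ hc2]
        have : 0 < nf ρ S ^ (γ - 1) := Real.rpow_pos_of_pos hnpos _
        have hγpos : (0:ℝ) < γ := by linarith
        have := mul_pos (mul_pos hγpos this) hE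
        simp only [hF'def]
        linarith
      rw [hg'def]
      calc (F' / c ^ 2)⁻¹ < 1⁻¹ := by
            apply inv_strictAnti₀ one_pos h1
        _ = 1 := inv_one
    have hg'pos : 0 < g' := by
      rw [hg'def]
      positivity
    refine ⟨(γ - 1) * c ^ 2 * (1 - g'), mul_pos (mul_pos hγ1 hc2) (by linarith), ?_⟩
    have hD : HasDerivAt (fun r : ℝ => (γ - 1) * c ^ 2 * (r - nf r S))
        ((γ - 1) * c ^ 2 * (1 - g')) ρ :=
      ((hasDerivAt_id ρ).sub hinv).const_mul _
    apply hD.congr_of_eventuallyEq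
    filter_upwards [hevpos] with r hr
    have := heq r hr.le S
    have hx : nf r S ^ γ * E = c ^ 2 * (r - nf r S) := by linarith
    rw [mul_assoc, hx]
    ring
end

section
/- Fix γ > 1, C_v > 0, c > 0, B > 0, and let P(ρ,S) be the polytropic relativistic pressure defined via n. Then uniformly for |S| ≤ B, as ρ → 0⁺: P(ρ,S) = Θ(ρ^γ), ∂ρ P(ρ,S) = Θ(ρ^{γ-1}), and ∂S P(ρ,S) = Θ(ρ^γ), i.e., there exist constants 0 < c₁ ≤ c₂ and ρ₀ > 0 such that c₁ρ^γ ≤ P(ρ,S) ≤ c₂ρ^γ for 0 < ρ ≤ ρ₀ and |S| ≤ B (and similarly for the derivatives). -/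
open Real Filter
set_option maxHeartbeats 1000000

noncomputable def Ffun (γ : ℝ) : ℝ → ℝ := fun t => (max t 0) ^ γ + t

lemma Ffun_nonneg_eq (γ t : ℝ) (ht : 0 ≤ t) : Ffun γ t = t ^ γ + t := by
  simp [Ffun, max_eq_left ht]

lemma Ffun_strictMono (γ : ℝ) (hγ : 0 < γ) : StrictMono (Ffun γ) := by
  intro t s hts
  have h1 : (max t 0) ^ γ ≤ (max s 0) ^ γ :=
    Real.rpow_le_rpow (le_max_right _ _) (max_le_max hts.le le_rfl) hγ.le
  exact add_lt_add_of_le_of_lt h1 hts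

lemma Ffun_continuous (γ : ℝ) (hγ : 0 < γ) : Continuous (Ffun γ) := by
  have h1 : Continuous (fun t : ℝ => (max t 0) ^ γ) := by
    rw [continuous_iff_continuousAt]
    intro x
    exact (Real.continuousAt_rpow_const _ _ (Or.inr hγ.le)).comp
      ((continuous_id.max continuous_const).continuousAt)
  exact h1.add continuous_id

lemma Ffun_surjective (γ : ℝ) (hγ : 0 < γ) : Function.Surjective (Ffun γ) := by
  apply (Ffun_continuous γ hγ).surjective
  · apply tendsto_atTop_mono (fun t => ?_) tendsto_id
    simpa [Ffun] using Real.rpow_nonneg (le_max_right t 0) γ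
  · have : (fun t : ℝ => t) =ᶠ[atBot] Ffun γ := by
      filter_upwards [eventually_le_atBot (0:ℝ)] with t ht
      simp [Ffun, max_eq_right ht, Real.zero_rpow hγ.ne']
    exact Tendsto.congr' this tendsto_id

noncomputable def Hiso (γ : ℝ) (hγ : 0 < γ) : ℝ ≃o ℝ :=
  StrictMono.orderIsoOfSurjective (Ffun γ) (Ffun_strictMono γ hγ) (Ffun_surjective γ hγ)

noncomputable def Hfun (γ : ℝ) (hγ : 0 < γ) : ℝ → ℝ := fun x => (Hiso γ hγ).symm x

lemma Ffun_Hfun (γ : ℝ) (hγ : 0 < γ) (x : ℝ) : Ffun γ (Hfun γ hγ x) = x :=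
  (Hiso γ hγ).apply_symm_apply x

lemma Hfun_zero (γ : ℝ) (hγ : 0 < γ) : Hfun γ hγ 0 = 0 := by
  have h0 : Ffun γ 0 = 0 := by simp [Ffun, Real.zero_rpow hγ.ne']
  have hc : (Hiso γ hγ) 0 = 0 := by
    rw [show ((Hiso γ hγ) 0) = Ffun γ 0 from congrFun
      (StrictMono.coe_orderIsoOfSurjective _ _ _) 0, h0]
  rw [Hfun]
  nth_rewrite 1 [← hc]
  exact (Hiso γ hγ).symm_apply_apply 0

lemma Hfun_nonneg (γ : ℝ) (hγ : 0 < γ) {x : ℝ} (hx : 0 ≤ x) : 0 ≤ Hfun γ hγ x := by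
  have h := (Hiso γ hγ).symm.monotone hx
  rw [show (Hiso γ hγ).symm 0 = 0 from Hfun_zero γ hγ] at h
  exact h

lemma Hfun_pos (γ : ℝ) (hγ : 0 < γ) {x : ℝ} (hx : 0 < x) : 0 < Hfun γ hγ x := by
  have h := (Hiso γ hγ).symm.strictMono hx
  rw [show (Hiso γ hγ).symm 0 = 0 from Hfun_zero γ hγ] at h
  exact h

lemma Hfun_continuous (γ : ℝ) (hγ : 0 < γ) : Continuous (Hfun γ hγ) :=
  ((Hiso γ hγ).toHomeomorph).symm.continuous

lemma Hfun_spec (γ : ℝ) (hγ : 0 < γ) {x : ℝ} (hx : 0 ≤ x) :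
    (Hfun γ hγ x) ^ γ + Hfun γ hγ x = x := by
  have h := Ffun_Hfun γ hγ x
  rwa [Ffun_nonneg_eq γ _ (Hfun_nonneg γ hγ hx)] at h

lemma Hfun_hasDerivAt (γ : ℝ) (hγ : 1 < γ) {x : ℝ} (hx : 0 < x) :
    HasDerivAt (Hfun γ (by linarith)) (γ * (Hfun γ (by linarith) x) ^ (γ - 1) + 1)⁻¹ x := by
  have hγ0 : (0:ℝ) < γ := by linarith
  set t := Hfun γ hγ0 x with ht
  have htpos : 0 < t := Hfun_pos γ hγ0 hx
  have hF : HasDerivAt (Ffun γ) (γ * t ^ (γ - 1) + 1) t := by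
    have h1 : HasDerivAt (fun r : ℝ => r ^ γ + r) (γ * t ^ (γ - 1) + 1) t :=
      (Real.hasDerivAt_rpow_const (Or.inl htpos.ne')).add (hasDerivAt_id t)
    apply h1.congr_of_eventuallyEq
    filter_upwards [eventually_gt_nhds htpos] with r hr
    rw [Ffun_nonneg_eq γ r hr.le]
  have hne : γ * t ^ (γ - 1) + 1 ≠ 0 := by
    have : 0 ≤ γ * t ^ (γ - 1) := by positivity
    linarith
  exact HasDerivAt.of_local_left_inverse ((Hfun_continuous γ hγ0).continuousAt) hF hne
    (Filter.Eventually.of_forall (Ffun_Hfun γ hγ0))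

noncomputable def mufun (γ Cv c : ℝ) : ℝ → ℝ :=
  fun S => (c^2 * Real.exp (-S/Cv)) ^ ((γ-1)⁻¹)

lemma mufun_pos (γ Cv c : ℝ) (hc : 0 < c) (S : ℝ) : 0 < mufun γ Cv c S := by
  apply Real.rpow_pos_of_pos; positivity

lemma mufun_pow (γ Cv c : ℝ) (hγ : 1 < γ) (hc : 0 < c) (S : ℝ) :
    (mufun γ Cv c S) ^ (γ - 1) = c^2 * Real.exp (-S/Cv) := by
  apply Real.rpow_inv_rpow
  · positivity
  · linarith

lemma mufun_eq (γ Cv c : ℝ) (hγ : 1 < γ) (hCv : 0 < Cv) (hc : 0 < c) (S : ℝ) :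
    mufun γ Cv c S = (c^2) ^ ((γ-1)⁻¹) * Real.exp (-((Cv * (γ-1))⁻¹) * S) := by
  rw [mufun, Real.mul_rpow (by positivity) (Real.exp_pos _).le,
    Real.rpow_def_of_pos (Real.exp_pos _), Real.log_exp]
  congr 1
  field_simp

lemma mufun_hasDerivAt (γ Cv c : ℝ) (hγ : 1 < γ) (hCv : 0 < Cv) (hc : 0 < c) (S : ℝ) :
    HasDerivAt (mufun γ Cv c) (-((Cv * (γ-1))⁻¹) * mufun γ Cv c S) S := by
  have h : HasDerivAt (fun s : ℝ => (c^2) ^ ((γ-1)⁻¹) * Real.exp (-((Cv * (γ-1))⁻¹) * s))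
      ((c^2) ^ ((γ-1)⁻¹) * (Real.exp (-((Cv * (γ-1))⁻¹) * S) * (-((Cv * (γ-1))⁻¹)))) S := by
    simpa using (((hasDerivAt_id S).const_mul (-((Cv * (γ-1))⁻¹))).exp).const_mul ((c^2) ^ ((γ-1)⁻¹))
  have h2 : HasDerivAt (mufun γ Cv c)
      ((c^2) ^ ((γ-1)⁻¹) * (Real.exp (-((Cv * (γ-1))⁻¹) * S) * (-((Cv * (γ-1))⁻¹)))) S := by
    apply h.congr_of_eventuallyEq
    filter_upwards with s
    rw [mufun_eq γ Cv c hγ hCv hc]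
  have : (c^2) ^ ((γ-1)⁻¹) * (Real.exp (-((Cv * (γ-1))⁻¹) * S) * (-((Cv * (γ-1))⁻¹)))
      = -((Cv * (γ-1))⁻¹) * mufun γ Cv c S := by
    rw [mufun_eq γ Cv c hγ hCv hc]; ring
  rwa [this] at h2

lemma poly_inj (γ b c : ℝ) (hγ : 0 < γ) (hb : 0 < b) (hc : 0 < c) {x y : ℝ}
    (hx : 0 ≤ x) (hy : 0 ≤ y) (h : x ^ γ * b + c^2 * x = y ^ γ * b + c^2 * y) : x = y := by
  rcases lt_trichotomy x y with hlt | he | hgt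
  · exfalso
    have h1 : x ^ γ * b ≤ y ^ γ * b :=
      mul_le_mul_of_nonneg_right (Real.rpow_le_rpow hx hlt.le hγ.le) hb.le
    have h2 : c^2 * x < c^2 * y := mul_lt_mul_of_pos_left hlt (by positivity)
    linarith
  · exact he
  · exfalso
    have h1 : y ^ γ * b ≤ x ^ γ * b :=
      mul_le_mul_of_nonneg_right (Real.rpow_le_rpow hy hgt.le hγ.le) hb.le
    have h2 : c^2 * y < c^2 * x := mul_lt_mul_of_pos_left hgt (by positivity)
    linarith

lemma nf_eq (γ Cv c : ℝ) (hγ : 1 < γ) (hCv : 0 < Cv) (hc : 0 < c)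
    (nf : ℝ → ℝ → ℝ)
    (hnonneg : ∀ ρ : ℝ, 0 ≤ ρ → ∀ S : ℝ, 0 ≤ nf ρ S)
    (heq : ∀ ρ : ℝ, 0 ≤ ρ → ∀ S : ℝ,
      (nf ρ S) ^ γ * Real.exp (S / Cv) + c ^ 2 * (nf ρ S - ρ) = 0)
    (ρ : ℝ) (hρ : 0 ≤ ρ) (S : ℝ) :
    nf ρ S = mufun γ Cv c S * Hfun γ (by linarith) (ρ / mufun γ Cv c S) := by
  have hγ0 : (0:ℝ) < γ := by linarith
  set μ := mufun γ Cv c S with hμdef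
  have hμ : 0 < μ := mufun_pos γ Cv c hc S
  set t := Hfun γ hγ0 (ρ / μ) with htdef
  have ht0 : 0 ≤ t := Hfun_nonneg γ hγ0 (by positivity)
  have hts : t ^ γ + t = ρ / μ := Hfun_spec γ hγ0 (by positivity)
  set b := Real.exp (S / Cv) with hbdef
  have hb : 0 < b := Real.exp_pos _
  -- μ^(γ-1) * b = c^2
  have hμb : μ ^ (γ - 1) * b = c ^ 2 := by
    rw [hμdef, mufun_pow γ Cv c hγ hc, hbdef, mul_assoc, ← Real.exp_add]
    have : -S/Cv + S/Cv = 0 := by ring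
    rw [this, Real.exp_zero, mul_one]
  have hμγ : μ ^ γ = μ ^ (γ-1) * μ := by
    rw [← Real.rpow_add_one hμ.ne' (γ-1)]
    norm_num
  -- the candidate satisfies the equation
  have hcand : (μ * t) ^ γ * b + c^2 * (μ * t) = c^2 * ρ := by
    rw [Real.mul_rpow hμ.le ht0, hμγ]
    have : μ ^ (γ - 1) * μ * t ^ γ * b + c ^ 2 * (μ * t)
        = (μ ^ (γ-1) * b) * (μ * t ^ γ) + c^2 * (μ * t) := by ring
    rw [this, hμb]
    have : c ^ 2 * (μ * t ^ γ) + c ^ 2 * (μ * t) = c^2 * μ * (t ^ γ + t) := by ring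
    rw [this, hts]
    field_simp
  have hnf : (nf ρ S) ^ γ * b + c^2 * (nf ρ S) = c^2 * ρ := by
    have := heq ρ hρ S
    rw [← hbdef] at this
    nlinarith [this]
  exact poly_inj γ b c hγ0 hb hc (hnonneg ρ hρ S) (by positivity)
    (by rw [hnf, hcand])

/-- Uniformly for `|S| ≤ B`, as `ρ → 0⁺` one has `P = Θ(ρ^γ)`,
`∂ρ P = Θ(ρ^(γ-1))` and `∂S P = Θ(ρ^γ)`. -/
theorem stmt_14 (γ Cv c B : ℝ) (hγ : 1 < γ) (hCv : 0 < Cv) (hc : 0 < c) (hB : 0 < B)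
    (nf : ℝ → ℝ → ℝ)
    (hnonneg : ∀ ρ : ℝ, 0 ≤ ρ → ∀ S : ℝ, 0 ≤ nf ρ S)
    (heq : ∀ ρ : ℝ, 0 ≤ ρ → ∀ S : ℝ,
      (nf ρ S) ^ γ * Real.exp (S / Cv) + c ^ 2 * (nf ρ S - ρ) = 0) :
    ∃ c₁ c₂ ρ₀ : ℝ, 0 < c₁ ∧ c₁ ≤ c₂ ∧ 0 < ρ₀ ∧
      ∀ ρ S : ℝ, 0 < ρ → ρ ≤ ρ₀ → |S| ≤ B →
        (c₁ * ρ ^ γ ≤ (γ - 1) * (nf ρ S) ^ γ * Real.exp (S / Cv) ∧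
          (γ - 1) * (nf ρ S) ^ γ * Real.exp (S / Cv) ≤ c₂ * ρ ^ γ) ∧
        (∃ dρ : ℝ,
          HasDerivAt (fun r : ℝ => (γ - 1) * (nf r S) ^ γ * Real.exp (S / Cv)) dρ ρ ∧
          c₁ * ρ ^ (γ - 1) ≤ dρ ∧ dρ ≤ c₂ * ρ ^ (γ - 1)) ∧
        (∃ dS : ℝ,
          HasDerivAt (fun s : ℝ => (γ - 1) * (nf ρ s) ^ γ * Real.exp (s / Cv)) dS S ∧
          c₁ * ρ ^ γ ≤ dS ∧ dS ≤ c₂ * ρ ^ γ) := by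
  have hγ0 : (0:ℝ) < γ := by linarith
  have hγ1 : (0:ℝ) < γ - 1 := by linarith
  set bmin := Real.exp (-B/Cv) with hbmindef
  set bmax := Real.exp (B/Cv) with hbmaxdef
  have hbmin : 0 < bmin := Real.exp_pos _
  have hbmax : 0 < bmax := Real.exp_pos _
  have hbmm : bmin ≤ bmax := by
    apply Real.exp_le_exp.mpr
    have : -B/Cv ≤ B/Cv := by
      apply div_le_div_of_nonneg_right ?_ hCv.le
      linarith
    exact this
  set ρ₀ := (c^2/(2*bmax)) ^ ((γ-1)⁻¹) with hρ₀def
  have hρ₀pos : 0 < ρ₀ := by apply Real.rpow_pos_of_pos; positivity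
  have hρ₀pow : ρ₀ ^ (γ-1) = c^2/(2*bmax) := by
    apply Real.rpow_inv_rpow (by positivity)
    linarith
  set K1 := (γ-1) * bmin / (2:ℝ)^γ with hK1def
  set L1 := (γ-1)*γ*bmin/((2:ℝ)^(γ-1) * (1+γ/2)) with hL1def
  set M1 := (γ-1)*bmin/((2:ℝ)^γ * Cv * (1+γ/2)) with hM1def
  have h2γ : (0:ℝ) < (2:ℝ)^γ := Real.rpow_pos_of_pos (by norm_num) _
  have h2γ1 : (0:ℝ) < (2:ℝ)^(γ-1) := Real.rpow_pos_of_pos (by norm_num) _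
  have hK1pos : 0 < K1 := by rw [hK1def]; positivity
  have hL1pos : 0 < L1 := by rw [hL1def]; positivity
  have hM1pos : 0 < M1 := by rw [hM1def]; positivity
  set c₁ := min K1 (min L1 M1) with hc₁def
  set c₂ := max ((γ-1)*bmax) (max ((γ-1)*γ*bmax) ((γ-1)*bmax/Cv)) with hc₂def
  have hc₁pos : 0 < c₁ := lt_min hK1pos (lt_min hL1pos hM1pos)
  have hc₁₂ : c₁ ≤ c₂ := by
    have h1 : c₁ ≤ K1 := min_le_left _ _
    have h2 : K1 ≤ (γ-1)*bmin := by
      rw [hK1def]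
      apply div_le_self (by positivity)
      exact Real.one_le_rpow (by norm_num) hγ0.le
    have h3 : (γ-1)*bmin ≤ (γ-1)*bmax := by nlinarith
    have h4 : (γ-1)*bmax ≤ c₂ := le_max_left _ _
    linarith
  refine ⟨c₁, c₂, ρ₀, hc₁pos, hc₁₂, hρ₀pos, fun ρ S hρ hρρ₀ hSB => ?_⟩
  -- setup
  set b := Real.exp (S/Cv) with hbdef
  have hb : 0 < b := Real.exp_pos _
  have hSbounds : -B ≤ S ∧ S ≤ B := abs_le.mp hSB
  have hbl : bmin ≤ b := by
    apply Real.exp_le_exp.mpr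
    exact div_le_div_of_nonneg_right (by linarith [hSbounds.1]) hCv.le
  have hbu : b ≤ bmax := by
    apply Real.exp_le_exp.mpr
    exact div_le_div_of_nonneg_right hSbounds.2 hCv.le
  set μ := mufun γ Cv c S with hμdef
  have hμ : 0 < μ := mufun_pos γ Cv c hc S
  have hμb : μ ^ (γ - 1) * b = c ^ 2 := by
    rw [hμdef, mufun_pow γ Cv c hγ hc, hbdef, mul_assoc, ← Real.exp_add]
    have : -S/Cv + S/Cv = 0 := by ring
    rw [this, Real.exp_zero, mul_one]
  set n := nf ρ S with hndef
  have hn0 : 0 ≤ n := hnonneg ρ hρ.le S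
  have heqn : n ^ γ * b = c^2 * (ρ - n) := by
    have := heq ρ hρ.le S
    rw [← hbdef, ← hndef] at this
    linear_combination this
  have hnρ : n ≤ ρ := by
    have h1 : 0 ≤ n ^ γ * b := by positivity
    by_contra hlt
    push_neg at hlt
    have h2 : c^2 * (ρ - n) < 0 := mul_neg_of_pos_of_neg (by positivity) (by linarith)
    linarith [heqn ▸ h1]
  have hkey : ρ ^ (γ-1) * b ≤ c^2/2 := by
    have h1 : ρ ^ (γ-1) ≤ ρ₀ ^ (γ-1) := Real.rpow_le_rpow hρ.le hρρ₀ hγ1.le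
    rw [hρ₀pow] at h1
    calc ρ ^ (γ-1) * b ≤ (c^2/(2*bmax)) * bmax := by
          apply mul_le_mul h1 hbu hb.le (by positivity)
      _ = c^2/2 := by
          rw [div_mul_eq_mul_div, mul_comm (2:ℝ) bmax, ← div_div]
          rw [mul_div_assoc, div_self hbmax.ne', mul_one]
  have hργ : ρ ^ γ = ρ ^ (γ-1) * ρ := by
    rw [← Real.rpow_add_one hρ.ne' (γ-1)]; norm_num
  have hn2 : ρ/2 ≤ n := by
    have h1 : n ^ γ ≤ ρ ^ γ := Real.rpow_le_rpow hn0 hnρ hγ0.le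
    have h2 : n ^ γ * b ≤ ρ ^ γ * b := mul_le_mul_of_nonneg_right h1 hb.le
    have h3 : ρ ^ γ * b = ρ * (ρ ^ (γ-1) * b) := by rw [hργ]; ring
    have h4 : ρ * (ρ ^ (γ-1) * b) ≤ ρ * (c^2/2) := by
      apply mul_le_mul_of_nonneg_left hkey hρ.le
    have h5 : c^2 * (ρ - n) ≤ ρ * (c^2/2) := by
      rw [← heqn]; linarith
    by_contra hlt
    push_neg at hlt
    have h6 : c^2 * (ρ/2) < c^2 * (ρ - n) := by
      apply mul_lt_mul_of_pos_left (by linarith) (by positivity)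
    have h7 : ρ * (c^2/2) = c^2 * (ρ/2) := by ring
    linarith
  have hnpos : 0 < n := lt_of_lt_of_le (by linarith) hn2
  -- identification
  have hneq : n = μ * Hfun γ hγ0 (ρ / μ) :=
    nf_eq γ Cv c hγ hCv hc nf hnonneg heq ρ hρ.le S
  set t := Hfun γ hγ0 (ρ / μ) with htdef
  have htpos : 0 < t := by
    by_contra h
    push_neg at h
    have h1 : μ * t ≤ μ * 0 := mul_le_mul_of_nonneg_left h hμ.le
    rw [mul_zero] at h1
    rw [hneq] at hnpos
    linarith
  have hts : t ^ γ + t = ρ / μ := Hfun_spec γ hγ0 (by positivity)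
  have hρeq : ρ = μ * (t ^ γ + t) := by
    rw [hts]; field_simp
  have hnγ1 : n ^ (γ-1) = μ ^ (γ-1) * t ^ (γ-1) := by
    rw [hneq, Real.mul_rpow hμ.le htpos.le]
  have hμγ : μ ^ γ = μ ^ (γ-1) * μ := by
    rw [← Real.rpow_add_one hμ.ne' (γ-1)]; norm_num
  have httγ : t ^ γ = t ^ (γ-1) * t := by
    rw [← Real.rpow_add_one htpos.ne' (γ-1)]; norm_num
  have hc2t : c^2 * t ^ (γ-1) = n ^ (γ-1) * b := by
    rw [hnγ1, ← hμb]; ring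
  have hc2tγ : c^2 * (μ * t ^ γ) = n ^ γ * b := by
    rw [hneq, Real.mul_rpow hμ.le htpos.le, hμγ, ← hμb]; ring
  -- bounds on E's
  have hnγ1low : (ρ/2) ^ (γ-1) ≤ n ^ (γ-1) := Real.rpow_le_rpow (by positivity) hn2 hγ1.le
  have hnγ1up : n ^ (γ-1) ≤ ρ ^ (γ-1) := Real.rpow_le_rpow hn0 hnρ hγ1.le
  have hnγlow : (ρ/2) ^ γ ≤ n ^ γ := Real.rpow_le_rpow (by positivity) hn2 hγ0.le
  have hnγup : n ^ γ ≤ ρ ^ γ := Real.rpow_le_rpow hn0 hnρ hγ0.le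
  have hdiv1 : (ρ/2) ^ (γ-1) = ρ ^ (γ-1) / 2 ^ (γ-1) := Real.div_rpow hρ.le (by norm_num) _
  have hdivγ : (ρ/2) ^ γ = ρ ^ γ / 2 ^ γ := Real.div_rpow hρ.le (by norm_num) _
  have hE : n ^ (γ-1) * b ≤ c^2/2 :=
    le_trans (mul_le_mul_of_nonneg_right hnγ1up hb.le) hkey
  have ht12 : c^2 * t ^ (γ-1) ≤ c^2/2 := by rw [hc2t]; exact hE
  have htle : t ^ (γ-1) ≤ 1/2 := by
    by_contra hcon
    push_neg at hcon
    have := mul_lt_mul_of_pos_left hcon (show (0:ℝ) < c^2 by positivity)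
    linarith
  have hDpos : 0 < γ * t ^ (γ-1) + 1 := by positivity
  have hDup : γ * t ^ (γ-1) + 1 ≤ 1 + γ/2 := by
    have := mul_le_mul_of_nonneg_left htle hγ0.le
    linarith
  have hρμpos : 0 < ρ / μ := by positivity
  refine ⟨⟨?_, ?_⟩, ?_, ?_⟩
  · -- P lower bound
    calc c₁ * ρ ^ γ ≤ K1 * ρ ^ γ :=
          mul_le_mul_of_nonneg_right (min_le_left _ _) (Real.rpow_nonneg hρ.le _)
      _ = (γ-1) * ((ρ/2) ^ γ * bmin) := by
          rw [hdivγ, hK1def]; field_simp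
      _ ≤ (γ-1) * (n ^ γ * b) := by
          apply mul_le_mul_of_nonneg_left ?_ hγ1.le
          exact mul_le_mul hnγlow hbl hbmin.le (by positivity)
      _ = (γ-1) * n ^ γ * b := by ring
  · -- P upper bound
    calc (γ-1) * n ^ γ * b ≤ (γ-1) * (ρ ^ γ * bmax) := by
          rw [mul_assoc]
          apply mul_le_mul_of_nonneg_left ?_ hγ1.le
          exact mul_le_mul hnγup hbu hb.le (Real.rpow_nonneg hρ.le _)
      _ = ((γ-1) * bmax) * ρ ^ γ := by ring
      _ ≤ c₂ * ρ ^ γ :=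
          mul_le_mul_of_nonneg_right (le_max_left _ _) (Real.rpow_nonneg hρ.le _)
  · -- derivative in ρ
    refine ⟨(γ-1) * γ * (n ^ (γ-1) * b) / (γ * t ^ (γ-1) + 1), ?_, ?_, ?_⟩
    · have hH := Hfun_hasDerivAt γ hγ hρμpos
      have hinner : HasDerivAt (fun r : ℝ => r / μ) (1/μ) ρ := by
        simpa using (hasDerivAt_id ρ).div_const μ
      have hHcomp : HasDerivAt (fun r : ℝ => Hfun γ hγ0 (r/μ))
          ((γ * t ^ (γ-1) + 1)⁻¹ * (1/μ)) ρ := hH.comp ρ hinner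
      have hmul : HasDerivAt (fun r : ℝ => μ * Hfun γ hγ0 (r/μ))
          (μ * ((γ * t ^ (γ-1) + 1)⁻¹ * (1/μ))) ρ := hHcomp.const_mul μ
      have hpow : HasDerivAt (fun r : ℝ => (μ * Hfun γ hγ0 (r/μ)) ^ γ)
          (μ * ((γ * t ^ (γ-1) + 1)⁻¹ * (1/μ)) * γ * (μ * t) ^ (γ-1)) ρ := by
        apply hmul.rpow_const
        left
        show μ * t ≠ 0
        positivity
      have hraw : HasDerivAt (fun r : ℝ => (γ-1) * (μ * Hfun γ hγ0 (r/μ)) ^ γ * b)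
          ((γ-1) * (μ * ((γ * t ^ (γ-1) + 1)⁻¹ * (1/μ)) * γ * (μ * t) ^ (γ-1)) * b) ρ :=
        (hpow.const_mul (γ-1)).mul_const b
      have hfeq : (fun r : ℝ => (γ-1) * nf r S ^ γ * b) =ᶠ[nhds ρ]
          (fun r : ℝ => (γ-1) * (μ * Hfun γ hγ0 (r/μ)) ^ γ * b) := by
        filter_upwards [eventually_gt_nhds hρ] with r hr
        rw [nf_eq γ Cv c hγ hCv hc nf hnonneg heq r hr.le S, ← hμdef]
      have hd := hraw.congr_of_eventuallyEq hfeq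
      have hval : (γ-1) * (μ * ((γ * t ^ (γ-1) + 1)⁻¹ * (1/μ)) * γ * (μ * t) ^ (γ-1)) * b
          = (γ-1) * γ * (n ^ (γ-1) * b) / (γ * t ^ (γ-1) + 1) := by
        rw [Real.mul_rpow hμ.le htpos.le, hnγ1]
        field_simp
      rw [← hval]
      exact hd
    · calc c₁ * ρ ^ (γ-1) ≤ L1 * ρ ^ (γ-1) := by
            apply mul_le_mul_of_nonneg_right ?_ (Real.rpow_nonneg hρ.le _)
            exact le_trans (min_le_right _ _) (min_le_left _ _)
        _ = (γ-1) * γ * ((ρ/2) ^ (γ-1) * bmin) / (1 + γ/2) := by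
            rw [hdiv1, hL1def]; field_simp
        _ ≤ (γ-1) * γ * (n ^ (γ-1) * b) / (γ * t ^ (γ-1) + 1) := by
            apply div_le_div₀ (by positivity) ?_ hDpos hDup
            apply mul_le_mul_of_nonneg_left ?_ (by positivity)
            exact mul_le_mul hnγ1low hbl hbmin.le (by positivity)
    · calc (γ-1) * γ * (n ^ (γ-1) * b) / (γ * t ^ (γ-1) + 1)
            ≤ (γ-1) * γ * (ρ ^ (γ-1) * bmax) / 1 := by
            apply div_le_div₀ (by positivity) ?_ one_pos (by linarith [mul_nonneg hγ0.le (Real.rpow_nonneg htpos.le (γ-1))])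
            apply mul_le_mul_of_nonneg_left ?_ (by positivity)
            exact mul_le_mul hnγ1up hbu hb.le (Real.rpow_nonneg hρ.le _)
        _ = ((γ-1) * γ * bmax) * ρ ^ (γ-1) := by ring
        _ ≤ c₂ * ρ ^ (γ-1) := by
            apply mul_le_mul_of_nonneg_right ?_ (Real.rpow_nonneg hρ.le _)
            exact le_trans (le_max_left _ _) (le_max_right _ _)
  · -- derivative in S
    refine ⟨(γ-1) * (n ^ γ * b) / (Cv * (γ * t ^ (γ-1) + 1)), ?_, ?_, ?_⟩
    · have hfunSeq : (fun s : ℝ => (γ-1) * nf ρ s ^ γ * Real.exp (s/Cv)) =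
          (fun s : ℝ => (γ-1) * c^2 *
            (ρ - mufun γ Cv c s * Hfun γ hγ0 (ρ / mufun γ Cv c s))) := by
        funext s
        have h1 := heq ρ hρ.le s
        have h2 := nf_eq γ Cv c hγ hCv hc nf hnonneg heq ρ hρ.le s
        rw [← h2]
        linear_combination (γ-1) * h1
      rw [hfunSeq]
      have hmder := mufun_hasDerivAt γ Cv c hγ hCv hc S
      have hμne : mufun γ Cv c S ≠ 0 := by rw [← hμdef]; exact hμ.ne'
      have hinner2 : HasDerivAt (fun s : ℝ => ρ / mufun γ Cv c s)
          ((0 * mufun γ Cv c S - ρ * (-((Cv * (γ-1))⁻¹) * mufun γ Cv c S)) / mufun γ Cv c S ^ 2) S :=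
        (hasDerivAt_const S ρ).div hmder hμne
      have hH := Hfun_hasDerivAt γ hγ hρμpos
      have hHcomp2 : HasDerivAt (fun s : ℝ => Hfun γ hγ0 (ρ / mufun γ Cv c s))
          ((γ * t ^ (γ-1) + 1)⁻¹ *
            ((0 * mufun γ Cv c S - ρ * (-((Cv * (γ-1))⁻¹) * mufun γ Cv c S)) / mufun γ Cv c S ^ 2)) S :=
        hH.comp S hinner2
      have hprod : HasDerivAt (fun s : ℝ => mufun γ Cv c s * Hfun γ hγ0 (ρ / mufun γ Cv c s))
          (-((Cv * (γ-1))⁻¹) * mufun γ Cv c S * t +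
            mufun γ Cv c S * ((γ * t ^ (γ-1) + 1)⁻¹ *
              ((0 * mufun γ Cv c S - ρ * (-((Cv * (γ-1))⁻¹) * mufun γ Cv c S)) / mufun γ Cv c S ^ 2))) S :=
        hmder.mul hHcomp2
      have hsub := hprod.const_sub ρ
      have hfinal := hsub.const_mul ((γ-1) * c^2)
      have hval2 : ((γ-1) * c^2) * (-(-((Cv * (γ-1))⁻¹) * mufun γ Cv c S * t +
            mufun γ Cv c S * ((γ * t ^ (γ-1) + 1)⁻¹ *
              ((0 * mufun γ Cv c S - ρ * (-((Cv * (γ-1))⁻¹) * mufun γ Cv c S)) / mufun γ Cv c S ^ 2))))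
          = (γ-1) * (n ^ γ * b) / (Cv * (γ * t ^ (γ-1) + 1)) := by
        rw [← hμdef, ← hc2tγ, hρeq, httγ]
        field_simp
        ring
      rw [← hval2]
      exact hfinal
    · calc c₁ * ρ ^ γ ≤ M1 * ρ ^ γ := by
            apply mul_le_mul_of_nonneg_right ?_ (Real.rpow_nonneg hρ.le _)
            exact le_trans (min_le_right _ _) (min_le_right _ _)
        _ = (γ-1) * ((ρ/2) ^ γ * bmin) / (Cv * (1 + γ/2)) := by
            rw [hdivγ, hM1def]; field_simp
        _ ≤ (γ-1) * (n ^ γ * b) / (Cv * (γ * t ^ (γ-1) + 1)) := by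
            apply div_le_div₀ (by positivity) ?_ (by positivity) ?_
            · apply mul_le_mul_of_nonneg_left ?_ hγ1.le
              exact mul_le_mul hnγlow hbl hbmin.le (by positivity)
            · apply mul_le_mul_of_nonneg_left hDup hCv.le
    · calc (γ-1) * (n ^ γ * b) / (Cv * (γ * t ^ (γ-1) + 1))
            ≤ (γ-1) * (ρ ^ γ * bmax) / Cv := by
            apply div_le_div₀ (by positivity) ?_ hCv ?_
            · apply mul_le_mul_of_nonneg_left ?_ hγ1.le
              exact mul_le_mul hnγup hbu hb.le (Real.rpow_nonneg hρ.le _)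
            · have h9 : 0 ≤ Cv * (γ * t ^ (γ-1)) := by positivity
              linarith
        _ = ((γ-1) * bmax / Cv) * ρ ^ γ := by ring
        _ ≤ c₂ * ρ ^ γ := by
            apply mul_le_mul_of_nonneg_right ?_ (Real.rpow_nonneg hρ.le _)
            exact le_trans (le_max_right _ _) (le_max_right _ _)
end
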